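/- Let 0 < α < π/2 with α ∉ {π/3, π/4}, and let β = π − α. Then there are no natural numbers a, b, c with a < b such that aα + bβ + c·(π/2) ∈ {π/2, π, 2π}. -/
import Mathlib


open Real

theorem stmt_8 (α : ℝ) (h0 : 0 < α) (h1 : α < π / 2)
    (h3 : α ≠ π / 3) (h4 : α ≠ π / 4) :
    ¬ ∃ a b c : ℕ, a < b ∧
      ((a : ℝ) * α + (b : ℝ) * (π - α) + (c : ℝ) * (π / 2) = π / 2 ∨
       (a : ℝ) * α + (b : ℝ) * (π - α) + (c : ℝ) * (π / 2) = π ∨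
       (a : ℝ) * α + (b : ℝ) * (π - α) + (c : ℝ) * (π / 2) = 2 * π) := by
  rintro ⟨a, b, c, hab, heq⟩
  have hπ := Real.pi_pos
  have hba : (a : ℝ) + 1 ≤ (b : ℝ) := by exact_mod_cast hab
  have key : 0 < ((b : ℝ) - a) * (π / 2 - α) := by nlinarith
  have hlt : ((a : ℝ) + b + c) < 4 := by
    have hc : (0 : ℝ) ≤ (c : ℝ) := Nat.cast_nonneg c
    rcases heq with h | h | h <;> nlinarith
  have hsum : a + b + c < 4 := by exact_mod_cast hlt
  have ha2 : a ≤ 2 := by omega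
  have hb3 : b ≤ 3 := by omega
  have hc2 : c ≤ 2 := by omega
  interval_cases a <;> interval_cases b <;> interval_cases c <;>
    push_cast at heq <;>
    rcases heq with h | h | h <;>
    first
      | linarith
      | exact h3 (by linarith)
      | exact h4 (by linarith)
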